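/- Let k = 5 and let σ = (σ^{ij})_{1≤i,j≤5} be an admissible family such that σ^{12} is the 4×4 identity matrix and the 20 × 20 block matrix σ has rank 8. Then for every (b₃, b₄, b₅) ∈ ℂ³ with (b₃, b₄, b₅) ≠ (0,0,0) there exist b₁, b₂ ∈ ℂ and a nonzero vector f ∈ ℂ⁴ such that σ · v = 0, where v ∈ ℂ^{20} is the column vector whose j-th block of size 4 is b_j f (for j = 1,…,5). -/
import Mathlib


open Matrix

/-- A family `σ = (σ^{ij})` of complex `4×4` matrices is *admissible* if each `σ i j` is
symmetric and `σ i j = -σ j i`. -/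
def Admissible (k : ℕ) (σ : Fin k → Fin k → Matrix (Fin 4) (Fin 4) ℂ) : Prop :=
  (∀ i j, (σ i j)ᵀ = σ i j) ∧ (∀ i j, σ i j = -σ j i)

/-- The `4k × 4k` block matrix whose `(i,j)` block is `σ i j`. -/
def blockMat (k : ℕ) (σ : Fin k → Fin k → Matrix (Fin 4) (Fin 4) ℂ) :
    Matrix (Fin k × Fin 4) (Fin k × Fin 4) ℂ :=
  Matrix.of fun p q => σ p.1 q.1 p.2 q.2

/-- Let `k = 5` and let `σ` be an admissible family with `σ¹² = 1` and
`20 × 20` block matrix of rank `8`.  Then for every `(b₃, b₄, b₅) ≠ (0,0,0)` there exist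
`b₁, b₂ ∈ ℂ` and a nonzero `f ∈ ℂ⁴` such that `σ · v = 0`, where `v` is the column whose
`j`-th block of size 4 is `b_j f`. -/
lemma common_eigvec (A B : Matrix (Fin 4) (Fin 4) ℂ) (h : A * B = B * A) :
    ∃ (f : Fin 4 → ℂ) (α β : ℂ), f ≠ 0 ∧ A.mulVec f = α • f ∧ B.mulVec f = β • f := by
  let 𝔄 : Module.End ℂ (Fin 4 → ℂ) := A.mulVecLin
  let 𝔅 : Module.End ℂ (Fin 4 → ℂ) := B.mulVecLin
  obtain ⟨μ, hμ⟩ := Module.End.exists_eigenvalue 𝔄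
  set E := Module.End.eigenspace 𝔄 μ with hE
  have hne : E ≠ ⊥ := hμ
  haveI : Nontrivial E := Submodule.nontrivial_iff_ne_bot.mpr hne
  have hmap : ∀ x ∈ E, 𝔅 x ∈ E := by
    intro x hx
    rw [Module.End.mem_eigenspace_iff] at hx ⊢
    have : 𝔄 (𝔅 x) = 𝔅 (𝔄 x) := by
      change (A.mulVecLin ∘ₗ B.mulVecLin) x = (B.mulVecLin ∘ₗ A.mulVecLin) x
      rw [← Matrix.mulVecLin_mul, ← Matrix.mulVecLin_mul, h]
    rw [this, hx, _root_.map_smul]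
  let 𝔅' : Module.End ℂ E := 𝔅.restrict hmap
  obtain ⟨ν, hν⟩ := Module.End.exists_eigenvalue 𝔅'
  obtain ⟨y, hy⟩ := hν.exists_hasEigenvector
  refine ⟨(y : Fin 4 → ℂ), μ, ν, ?_, ?_, ?_⟩
  · simpa [Submodule.coe_eq_zero] using hy.right
  · have hy2 : (y : Fin 4 → ℂ) ∈ Module.End.eigenspace 𝔄 μ := y.2
    rw [Module.End.mem_eigenspace_iff] at hy2
    exact hy2
  · have := hy.apply_eq_smul
    calc B.mulVec y = ((𝔅' y : E) : Fin 4 → ℂ) := rfl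
    _ = ((ν • y : E) : Fin 4 → ℂ) := by rw [this]
    _ = ν • (y : Fin 4 → ℂ) := rfl

theorem stmt7 (σ : Fin 5 → Fin 5 → Matrix (Fin 4) (Fin 4) ℂ) (hσ : Admissible 5 σ)
    (h12 : σ 0 1 = 1) (hrank : (blockMat 5 σ).rank = 8) :
    ∀ b3 b4 b5 : ℂ, ¬(b3 = 0 ∧ b4 = 0 ∧ b5 = 0) →
      ∃ (b1 b2 : ℂ) (f : Fin 4 → ℂ), f ≠ 0 ∧
        (blockMat 5 σ).mulVec (fun q => ![b1, b2, b3, b4, b5] q.1 * f q.2) = 0 := by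
  obtain ⟨hsym, hanti⟩ := hσ
  intro b3 b4 b5 _hb
  have hdiag : ∀ i, σ i i = 0 := by
    intro i
    ext p q
    have h2 : σ i i p q = -(σ i i p q) := by
      simpa using congrFun (congrFun (hanti i i) p) q
    have h3 : σ i i p q = 0 := by linear_combination h2 / 2
    simpa using h3
  have h10 : σ 1 0 = -1 := by rw [hanti 1 0, h12]
  -- the top 8 rows
  obtain ⟨T, hT⟩ : ∃ T : (Fin 2 × Fin 4) → (Fin 5 × Fin 4) → ℂ,
      T = fun r => blockMat 5 σ (![(0 : Fin 5), 1] r.1, r.2) := ⟨_, rfl⟩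
  -- T is linearly independent
  have hTli : LinearIndependent ℂ T := by
    rw [Fintype.linearIndependent_iff]
    intro g hg r
    have key : ∀ u : Fin 4, g (0, u) = 0 ∧ g (1, u) = 0 := by
      intro u
      have h1 := congrFun hg ((1 : Fin 5), u)
      have h0 := congrFun hg ((0 : Fin 5), u)
      simp only [hT, blockMat, Matrix.of_apply, Finset.sum_apply, Pi.smul_apply,
        smul_eq_mul, Fintype.sum_prod_type, Fin.sum_univ_two, Pi.zero_apply,
        Matrix.cons_val_zero, Matrix.cons_val_one, Matrix.head_cons] at h1 h0
      rw [h12, hdiag 1] at h1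
      rw [hdiag 0, h10] at h0
      simp [Matrix.one_apply, Finset.sum_ite_eq'] at h1 h0
      exact ⟨h1, h0⟩
    obtain ⟨e, u⟩ := r
    fin_cases e
    · exact (key u).1
    · exact (key u).2
  -- every row of the block matrix is in the span of the top 8 rows
  have hrow_span : ∀ r, (blockMat 5 σ) r ∈ Submodule.span ℂ (Set.range T) := by
    have hle : Submodule.span ℂ (Set.range T) ≤
        Submodule.span ℂ (Set.range (blockMat 5 σ)) := by
      apply Submodule.span_mono
      rintro _ ⟨r, rfl⟩
      exact ⟨(![(0 : Fin 5), 1] r.1, r.2), (congrFun hT r).symm⟩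
    have hfr1 : Module.finrank ℂ (Submodule.span ℂ (Set.range T)) = 8 := by
      rw [finrank_span_eq_card hTli]; simp
    have hfr2 : Module.finrank ℂ
        (Submodule.span ℂ (Set.range (blockMat 5 σ))) = 8 := by
      have h := (blockMat 5 σ).rank_eq_finrank_span_row
      rw [hrank] at h
      exact h.symm
    have hEq : Submodule.span ℂ (Set.range T) =
        Submodule.span ℂ (Set.range (blockMat 5 σ)) :=
      Submodule.eq_of_le_of_finrank_eq hle (by rw [hfr1, hfr2])
    intro r
    rw [hEq]
    exact Submodule.subset_span (Set.mem_range_self r)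
  -- the structural formula
  have hform : ∀ i j : Fin 5, 2 ≤ (i : ℕ) → 2 ≤ (j : ℕ) →
      σ i j = σ 0 i * σ 1 j - σ 1 i * σ 0 j := by
    intro i j hi hj
    ext p q
    obtain ⟨c, hc⟩ := (Submodule.mem_span_range_iff_exists_fun ℂ).mp (hrow_span (i, p))
    have hc0 : ∀ u : Fin 4, c (0, u) = σ i 1 p u := by
      intro u
      have h1 := congrFun hc ((1 : Fin 5), u)
      simp only [hT, blockMat, Matrix.of_apply, Finset.sum_apply, Pi.smul_apply,
        smul_eq_mul, Fintype.sum_prod_type, Fin.sum_univ_two,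
        Matrix.cons_val_zero, Matrix.cons_val_one, Matrix.head_cons] at h1
      rw [h12, hdiag 1] at h1
      simpa [Matrix.one_apply, Finset.sum_ite_eq'] using h1
    have hc1 : ∀ u : Fin 4, c (1, u) = -(σ i 0 p u) := by
      intro u
      have h0 := congrFun hc ((0 : Fin 5), u)
      simp only [hT, blockMat, Matrix.of_apply, Finset.sum_apply, Pi.smul_apply,
        smul_eq_mul, Fintype.sum_prod_type, Fin.sum_univ_two,
        Matrix.cons_val_zero, Matrix.cons_val_one, Matrix.head_cons] at h0
      rw [hdiag 0, h10] at h0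
      have : -(c (1, u)) = σ i 0 p u := by
        simpa [Matrix.one_apply, Finset.sum_ite_eq'] using h0
      exact neg_eq_iff_eq_neg.mp this
    have hjq := congrFun hc (j, q)
    simp only [hT, blockMat, Matrix.of_apply, Finset.sum_apply, Pi.smul_apply,
      smul_eq_mul, Fintype.sum_prod_type, Fin.sum_univ_two,
      Matrix.cons_val_zero, Matrix.cons_val_one, Matrix.head_cons] at hjq
    simp only [hc0, hc1] at hjq
    have hi1 : σ i 1 = -σ 1 i := hanti i 1
    have hi0 : σ i 0 = -σ 0 i := hanti i 0
    rw [Matrix.sub_apply, Matrix.mul_apply, Matrix.mul_apply, ← hjq]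
    rw [hi1, hi0, ← Finset.sum_add_distrib, ← Finset.sum_sub_distrib]
    apply Finset.sum_congr rfl
    intro u _
    simp only [Matrix.neg_apply]
    ring
  -- commuting matrices
  obtain ⟨A, hA⟩ : ∃ A, A = b3 • σ 0 2 + b4 • σ 0 3 + b5 • σ 0 4 := ⟨_, rfl⟩
  obtain ⟨Bm, hB⟩ : ∃ Bm, Bm = b3 • σ 1 2 + b4 • σ 1 3 + b5 • σ 1 4 := ⟨_, rfl⟩
  have e22 := hform 2 2 (by decide) (by decide)
  have e23 := hform 2 3 (by decide) (by decide)
  have e24 := hform 2 4 (by decide) (by decide)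
  have e32 := hform 3 2 (by decide) (by decide)
  have e33 := hform 3 3 (by decide) (by decide)
  have e34 := hform 3 4 (by decide) (by decide)
  have e42 := hform 4 2 (by decide) (by decide)
  have e43 := hform 4 3 (by decide) (by decide)
  have e44 := hform 4 4 (by decide) (by decide)
  have key : A * Bm - Bm * A =
      (b3 * b3) • σ 2 2 + (b3 * b4) • σ 2 3 + (b3 * b5) • σ 2 4
    + (b4 * b3) • σ 3 2 + (b4 * b4) • σ 3 3 + (b4 * b5) • σ 3 4
    + (b5 * b3) • σ 4 2 + (b5 * b4) • σ 4 3 + (b5 * b5) • σ 4 4 := by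
    rw [hA, hB, e22, e23, e24, e32, e33, e34, e42, e43, e44]
    simp only [add_mul, mul_add, smul_mul_assoc, mul_smul_comm, smul_smul, smul_sub]
    module
  have hzero : A * Bm - Bm * A = 0 := by
    rw [key, hdiag 2, hdiag 3, hdiag 4, hanti 3 2, hanti 4 2, hanti 4 3]
    module
  have hcomm : A * Bm = Bm * A := sub_eq_zero.mp hzero
  obtain ⟨f, α, β, hf0, hAf, hBf⟩ := common_eigvec A Bm hcomm
  refine ⟨β, -α, f, hf0, ?_⟩
  -- the candidate vector
  obtain ⟨v, hv⟩ : ∃ v : Fin 5 × Fin 4 → ℂ,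
      v = fun q => ![β, -α, b3, b4, b5] q.1 * f q.2 := ⟨_, rfl⟩
  have hdot : ∀ (i : Fin 5) (p : Fin 4),
      blockMat 5 σ (i, p) ⬝ᵥ v
        = ∑ j : Fin 5, ![β, -α, b3, b4, b5] j * ((σ i j).mulVec f p) := by
    intro i p
    simp only [dotProduct, Fintype.sum_prod_type, blockMat, Matrix.of_apply, hv,
      Matrix.mulVec, dotProduct, Finset.mul_sum]
    exact Finset.sum_congr rfl fun j _ => Finset.sum_congr rfl fun q _ => by ring
  have hgen : ∀ r, T r ⬝ᵥ v = 0 := by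
    rintro ⟨e, p⟩
    have hAp := congrFun hAf p
    have hBp := congrFun hBf p
    rw [hA] at hAp
    rw [hB] at hBp
    simp only [Matrix.add_mulVec, Matrix.smul_mulVec, Pi.add_apply,
      Pi.smul_apply, smul_eq_mul] at hAp hBp
    fin_cases e
    · rw [hT]
      show blockMat 5 σ (0, p) ⬝ᵥ v = 0
      rw [hdot 0 p, Fin.sum_univ_five]
      simp only [Matrix.cons_val_zero, Matrix.cons_val_one, Matrix.head_cons,
        Matrix.cons_val_two, Matrix.tail_cons, Matrix.cons_val_three,
        Matrix.cons_val_four]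
      rw [hdiag 0, h12]
      simp only [Matrix.zero_mulVec, Pi.zero_apply, mul_zero, Matrix.one_mulVec,
        zero_add]
      linear_combination hAp
    · rw [hT]
      show blockMat 5 σ (1, p) ⬝ᵥ v = 0
      rw [hdot 1 p, Fin.sum_univ_five]
      simp only [Matrix.cons_val_zero, Matrix.cons_val_one, Matrix.head_cons,
        Matrix.cons_val_two, Matrix.tail_cons, Matrix.cons_val_three,
        Matrix.cons_val_four]
      rw [h10, hdiag 1]
      simp only [Matrix.zero_mulVec, Pi.zero_apply, mul_zero, Matrix.neg_mulVec,
        Matrix.one_mulVec, Pi.neg_apply]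
      linear_combination hBp
  have hall : ∀ w ∈ Submodule.span ℂ (Set.range T), w ⬝ᵥ v = 0 := by
    intro w hw
    induction hw using Submodule.span_induction with
    | mem x hx => obtain ⟨r, rfl⟩ := hx; exact hgen r
    | zero => simp
    | add x y _ _ hx hy => rw [add_dotProduct, hx, hy, add_zero]
    | smul a x _ hx => rw [smul_dotProduct, hx, smul_zero]
  funext r
  show blockMat 5 σ r ⬝ᵥ (fun q => ![β, -α, b3, b4, b5] q.1 * f q.2) = 0
  rw [← hv]
  exact hall _ (hrow_span r)
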